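/- Fix b ≥ 2, δ > 0, ω = (1+δ)·ln b / b, λ = ω(1+ω)^b, and suppose exp(2·(1.01)·(ωb)²/λ) ≤ 1.01. Define the sequence g_i by g_1 = 1/(1+ω), g_2 = (1/(1+ω))·(1 − (1/(1+ω))^b), and the recursion g_{i+1} = (ω/(1+ω))·(1 − (1 − g_{i-1}^b)^b) + (1/(1+ω))·(1 − g_i^b) for i ≥ 2. Then for all i ≥ 1, g_i ≤ (1.01)^{1/b}/(1+ω). -/

import Mathlib

set_option maxHeartbeats 1000000 in
/-- Inductive bound `g_i ≤ 1.01^{1/b}/(1+ω)` for the probabilities that the bottom-up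
reconstruction rule outputs 0 on the broadcast tree of height `i`. -/
theorem stmt4 (b : ℕ) (hb : 2 ≤ b) (δ ω lam : ℝ) (hδ : 0 < δ)
    (hω : ω = (1 + δ) * Real.log b / b) (hlam : lam = ω * (1 + ω) ^ b)
    (hcond : Real.exp (2 * 1.01 * (ω * b) ^ 2 / lam) ≤ 1.01)
    (g : ℕ → ℝ)
    (hg1 : g 1 = 1 / (1 + ω))
    (hg2 : g 2 = (1 / (1 + ω)) * (1 - (1 / (1 + ω)) ^ b))
    (hrec : ∀ i, 2 ≤ i →
      g (i + 1) = (ω / (1 + ω)) * (1 - (1 - g (i - 1) ^ b) ^ b)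
          + (1 / (1 + ω)) * (1 - g i ^ b)) :
    ∀ i, 1 ≤ i → g i ≤ (1.01 : ℝ) ^ ((1 : ℝ) / b) / (1 + ω) := by
  set M : ℝ := (1.01 : ℝ) ^ ((1 : ℝ) / b) with hM
  have hbR : (2 : ℝ) ≤ (b : ℝ) := by exact_mod_cast hb
  have hb0 : (0 : ℝ) < (b : ℝ) := by linarith
  have hbne : (b : ℝ) ≠ 0 := ne_of_gt hb0
  have hlogb : Real.log 2 ≤ Real.log b := Real.log_le_log (by norm_num) hbR
  have hlog2 : (0.69 : ℝ) ≤ Real.log 2 := by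
    have := Real.log_two_gt_d9; linarith
  have hωpos : 0 < ω := by
    rw [hω]; apply div_pos (by nlinarith [hlogb, hlog2]) hb0
  have h1ω : (0 : ℝ) < 1 + ω := by linarith
  have hωb : (0.69 : ℝ) ≤ ω * b := by
    have : ω * b = (1 + δ) * Real.log b := by rw [hω]; field_simp
    nlinarith [hlogb, hlog2]
  have hM1 : (1 : ℝ) ≤ M := by
    rw [hM]
    apply Real.one_le_rpow (by norm_num) (by positivity)
  have hMb : M ^ b = 1.01 := by
    rw [hM, ← Real.rpow_natCast (((1.01:ℝ)) ^ ((1:ℝ)/b)) b, ← Real.rpow_mul (by norm_num),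
      one_div, inv_mul_cancel₀ hbne, Real.rpow_one]
  have hMexp : M = Real.exp (Real.log 1.01 / b) := by
    rw [hM, Real.rpow_def_of_pos (by norm_num)]
    ring_nf
  have hM1ω : M ≤ 1 + ω := by
    have hB : (1.01 : ℝ) ≤ (1 + ω) ^ b := by
      have := one_add_mul_le_pow (a := ω) (n := b) (by linarith)
      nlinarith [hωb]
    have := pow_le_pow_left₀ (le_trans (by norm_num) hM1) (le_refl M) b
    nlinarith [pow_le_pow_iff_left₀ (le_trans (by norm_num : (0:ℝ) ≤ 1) hM1)
      (le_of_lt h1ω) (by omega : b ≠ 0) |>.mp (hMb ▸ hB)]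
  have hpωb : (0 : ℝ) < (1 + ω) ^ b := by positivity
  have hlampos : 0 < lam := by rw [hlam]; positivity
  -- key inequality from hcond
  have hx : 2 * 1.01 * (ω * b) ^ 2 / lam ≤ Real.log 1.01 :=
    (Real.le_log_iff_exp_le (by norm_num)).2 hcond
  have heq : 2 * 1.01 * (ω * b) ^ 2 / lam = 2 * (1.01 * ω * b / (1 + ω) ^ b * b) := by
    rw [hlam]; field_simp
  have hq0 : 0 ≤ 1.01 * ω * b / (1 + ω) ^ b * b := by positivity
  have hkey : 1.01 * ω * b / (1 + ω) ^ b ≤ Real.log 1.01 / b := by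
    rw [le_div_iff₀ hb0]
    nlinarith [heq ▸ hx]
  -- step bound
  have step : ∀ x y : ℝ, 0 ≤ x → x ≤ M / (1 + ω) → 0 ≤ y → y ≤ M / (1 + ω) →
      0 ≤ (ω / (1 + ω)) * (1 - (1 - x ^ b) ^ b) + (1 / (1 + ω)) * (1 - y ^ b) ∧
      (ω / (1 + ω)) * (1 - (1 - x ^ b) ^ b) + (1 / (1 + ω)) * (1 - y ^ b) ≤ M / (1 + ω) := by
    intro x y hx0 hxM hy0 hyM
    have hMle1 : M / (1 + ω) ≤ 1 := (div_le_one h1ω).2 hM1ω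
    have hx1 : x ≤ 1 := hxM.trans hMle1
    have hy1 : y ≤ 1 := hyM.trans hMle1
    have hxb0 : 0 ≤ x ^ b := by positivity
    have hyb0 : 0 ≤ y ^ b := by positivity
    have hxb1 : x ^ b ≤ 1 := pow_le_one₀ hx0 hx1
    have hyb1 : y ^ b ≤ 1 := pow_le_one₀ hy0 hy1
    have hin0 : 0 ≤ (1 - x ^ b) ^ b := pow_nonneg (by linarith) b
    have hin1 : (1 - x ^ b) ^ b ≤ 1 := pow_le_one₀ (by linarith) (by linarith)
    constructor
    · have t1 : 0 ≤ (ω / (1 + ω)) * (1 - (1 - x ^ b) ^ b) := by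
        apply mul_nonneg (by positivity); linarith
      have t2 : 0 ≤ (1 / (1 + ω)) * (1 - y ^ b) := by
        apply mul_nonneg (by positivity); linarith
      linarith
    · have hbern : 1 - (1 - x ^ b) ^ b ≤ x ^ b * b := by
        have h := one_add_mul_le_pow (a := -(x ^ b)) (n := b) (by linarith)
        have : (1 + -(x ^ b)) ^ b = (1 - x ^ b) ^ b := by ring_nf
        nlinarith [h]
      have hxbM : x ^ b ≤ 1.01 / (1 + ω) ^ b := by
        calc x ^ b ≤ (M / (1 + ω)) ^ b := pow_le_pow_left₀ hx0 hxM b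
        _ = M ^ b / (1 + ω) ^ b := by rw [div_pow]
        _ = 1.01 / (1 + ω) ^ b := by rw [hMb]
      have c1 : (ω / (1 + ω)) * (1 - (1 - x ^ b) ^ b) ≤
          (ω / (1 + ω)) * (1.01 / (1 + ω) ^ b * b) := by
        apply mul_le_mul_of_nonneg_left _ (by positivity)
        calc 1 - (1 - x ^ b) ^ b ≤ x ^ b * b := hbern
        _ ≤ 1.01 / (1 + ω) ^ b * b := by
            apply mul_le_mul_of_nonneg_right hxbM (le_of_lt hb0)
      have c2 : (1 / (1 + ω)) * (1 - y ^ b) ≤ 1 / (1 + ω) := by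
        have := mul_le_mul_of_nonneg_left (by linarith : 1 - y ^ b ≤ 1)
          (by positivity : (0:ℝ) ≤ 1 / (1 + ω))
        simpa using this
      have c3 : (ω / (1 + ω)) * (1.01 / (1 + ω) ^ b * b) + 1 / (1 + ω)
          = (1 / (1 + ω)) * (1 + 1.01 * ω * b / (1 + ω) ^ b) := by
        field_simp; ring
      have c4 : 1 + 1.01 * ω * b / (1 + ω) ^ b ≤ M := by
        calc 1 + 1.01 * ω * b / (1 + ω) ^ b
            ≤ Real.exp (1.01 * ω * ↑b / (1 + ω) ^ b) := by
              linarith [Real.add_one_le_exp (1.01 * ω * ↑b / (1 + ω) ^ b)]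
        _ ≤ Real.exp (Real.log 1.01 / b) := Real.exp_le_exp.2 hkey
        _ = M := hMexp.symm
      calc (ω / (1 + ω)) * (1 - (1 - x ^ b) ^ b) + (1 / (1 + ω)) * (1 - y ^ b)
          ≤ (ω / (1 + ω)) * (1.01 / (1 + ω) ^ b * b) + 1 / (1 + ω) := by linarith
      _ = (1 / (1 + ω)) * (1 + 1.01 * ω * b / (1 + ω) ^ b) := c3
      _ ≤ (1 / (1 + ω)) * M := by
          apply mul_le_mul_of_nonneg_left c4 (by positivity)
      _ = M / (1 + ω) := by ring
  -- two-step induction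
  have main : ∀ i, 1 ≤ i → (0 ≤ g i ∧ g i ≤ M / (1 + ω)) ∧
      (0 ≤ g (i + 1) ∧ g (i + 1) ≤ M / (1 + ω)) := by
    intro i hi
    induction i, hi using Nat.le_induction with
    | base =>
      have hMle1 : (1 : ℝ) / (1 + ω) ≤ M / (1 + ω) := by
        exact (div_le_div_iff_of_pos_right h1ω).2 hM1
      constructor
      · refine ⟨by rw [hg1]; positivity, ?_⟩
        rw [hg1]
        exact (div_le_div_iff_of_pos_right h1ω).2 hM1
      · have hc1 : (0:ℝ) ≤ 1 / (1 + ω) := by positivity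
        have hc2 : (1:ℝ) / (1 + ω) ≤ 1 := by
          rw [div_le_one h1ω]; linarith
        have hpb : ((1:ℝ) / (1 + ω)) ^ b ≤ 1 := pow_le_one₀ hc1 hc2
        have hpb0 : (0:ℝ) ≤ ((1:ℝ) / (1 + ω)) ^ b := by positivity
        constructor
        · rw [hg2]; apply mul_nonneg hc1; linarith
        · rw [hg2]
          calc (1 / (1 + ω)) * (1 - (1 / (1 + ω)) ^ b) ≤ (1 / (1 + ω)) * 1 := by
                apply mul_le_mul_of_nonneg_left (by linarith) hc1
          _ = 1 / (1 + ω) := by ring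
          _ ≤ M / (1 + ω) := (div_le_div_iff_of_pos_right h1ω).2 hM1
    | succ n hn ih =>
      refine ⟨ih.2, ?_⟩
      have hrw := hrec (n + 1) (by omega)
      have : n + 1 - 1 = n := by omega
      rw [this] at hrw
      rw [show n + 1 + 1 = n + 2 from rfl] at hrw
      rw [hrw]
      exact step (g n) (g (n + 1)) ih.1.1 ih.1.2 ih.2.1 ih.2.2
  intro i hi
  exact (main i hi).1.2
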